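/- For the isosceles triangle of unit inradius minimizing u+v, with w = √(8+4√5) and v = (w²+4)w/(2(w²-4)), the apex angle θ defined by cos(θ) = 1 - w²/(2v²) satisfies cos(θ) = √5 - 2 = 1/φ³, where φ = (1+√5)/2. -/

import Mathlib

theorem stmt_19 (w v φ : ℝ)
    (hw : w = Real.sqrt (8 + 4 * Real.sqrt 5))
    (hv : v = (w ^ 2 + 4) * w / (2 * (w ^ 2 - 4)))
    (hφ : φ = (1 + Real.sqrt 5) / 2) :
    1 - w ^ 2 / (2 * v ^ 2) = Real.sqrt 5 - 2 ∧
      (Real.sqrt 5 - 2) * φ ^ 3 = 1 := by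
  have hs : Real.sqrt 5 ^ 2 = 5 := Real.sq_sqrt (by norm_num)
  have hs0 : (1:ℝ) ≤ Real.sqrt 5 := by nlinarith [Real.sqrt_nonneg 5]
  set s := Real.sqrt 5 with hsdef
  have hw2 : w ^ 2 = 8 + 4 * s := by
    rw [hw]; exact Real.sq_sqrt (by positivity)
  have hwpos : 0 < w := by
    rw [hw]; exact Real.sqrt_pos.2 (by positivity)
  have hden : 2 * (w ^ 2 - 4) ≠ 0 := by rw [hw2]; nlinarith
  have hv0 : v ≠ 0 := by
    rw [hv]
    apply div_ne_zero
    · nlinarith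
    · exact hden
  constructor
  · rw [hv]
    field_simp
    linear_combination ((3-s)*(w^2+16+4*s) - 2*(w^2+4*s))*hw2 + (-16*s-80)*hs
  · rw [hφ]; ring_nf; nlinarith [hs]
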